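/- Let 𝒢 be a groupoid acting transitively on a set V, x an object of 𝒢, and v ∈ V_x. Then the automorphism group Aut(V,𝒢) of the action is isomorphic, as a group, to N(S_v)/S_v, where N(S_v) is the normalizer of the stability group S_v in the isotropy group x𝒢x; explicitly, each c ∈ N(S_v) determines a well-defined automorphism av ↦ acv (a ∈ 𝒢x), this assignment is surjective onto Aut(V,𝒢), and its kernel-type relation identifies c, c' exactly when c⁻¹c' ∈ S_v. -/
import Mathlib


/-!
Arrows-only formalization of `k`-graphs (higher-rank graphs), their coverings,
fundamental groupoids, and groupoid actions, following Pask–Quigg–Raeburn,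
"Coverings of k-graphs".

A small category is encoded by its set of arrows `A` together with
source/range maps `src rng : A → A` (whose common image is the set of
identities = vertices) and a (guarded) total composition `comp : A → A → A`,
where `comp f g` is the composite "f after g", meaningful when `src f = rng g`.
A `k`-graph additionally has a degree map `deg : A → (Fin k → ℕ)` which is
functorial and satisfies the unique factorization property.
-/

namespace KGraphCovering

/-- A `k`-graph in arrows-only form. -/
structure KGraphStruct (k : ℕ) (A : Type) : Type where
  src : A → A
  rng : A → A
  comp : A → A → A
  deg : A → (Fin k → ℕ)
  src_src : ∀ f, src (src f) = src f
  rng_src : ∀ f, rng (src f) = src f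
  src_rng : ∀ f, src (rng f) = rng f
  rng_rng : ∀ f, rng (rng f) = rng f
  comp_src_id : ∀ f, comp f (src f) = f
  rng_comp_id : ∀ f, comp (rng f) f = f
  src_comp : ∀ f g, src f = rng g → src (comp f g) = src g
  rng_comp : ∀ f g, src f = rng g → rng (comp f g) = rng f
  assoc : ∀ f g h, src f = rng g → src g = rng h →
    comp (comp f g) h = comp f (comp g h)
  deg_comp : ∀ f g, src f = rng g → deg (comp f g) = deg f + deg g
  deg_src : ∀ f, deg (src f) = 0
  factor : ∀ f m n, deg f = m + n →
    ∃! q : A × A, src q.1 = rng q.2 ∧ deg q.1 = m ∧ deg q.2 = n ∧ comp q.1 q.2 = f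

namespace KGraphStruct

variable {k : ℕ} {A : Type}

/-- The vertices (objects) are the identity arrows. -/
def IsVertex (S : KGraphStruct k A) (v : A) : Prop := S.src v = v

/-- A `k`-graph is connected if the equivalence relation generated by
"there is a morphism from `v` to `u`" relates all pairs of vertices. -/
def Connected (S : KGraphStruct k A) : Prop :=
  ∀ u v, S.IsVertex u → S.IsVertex v →
    Relation.EqvGen (fun a b => ∃ f, S.rng f = a ∧ S.src f = b) u v

end KGraphStruct

/-- A groupoid in arrows-only form. -/
structure GroupoidStruct (B : Type) : Type where
  src : B → B
  rng : B → B
  comp : B → B → B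
  inv : B → B
  src_src : ∀ f, src (src f) = src f
  rng_src : ∀ f, rng (src f) = src f
  src_rng : ∀ f, src (rng f) = rng f
  rng_rng : ∀ f, rng (rng f) = rng f
  comp_src_id : ∀ f, comp f (src f) = f
  rng_comp_id : ∀ f, comp (rng f) f = f
  src_comp : ∀ f g, src f = rng g → src (comp f g) = src g
  rng_comp : ∀ f g, src f = rng g → rng (comp f g) = rng f
  assoc : ∀ f g h, src f = rng g → src g = rng h →
    comp (comp f g) h = comp f (comp g h)
  src_inv : ∀ f, src (inv f) = rng f
  rng_inv : ∀ f, rng (inv f) = src f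
  inv_comp_self : ∀ f, comp (inv f) f = src f
  comp_inv_self : ∀ f, comp f (inv f) = rng f

namespace GroupoidStruct

variable {B : Type}

/-- The vertices (objects) of a groupoid are the identity arrows. -/
def IsVertex (G : GroupoidStruct B) (v : B) : Prop := G.src v = v

/-- A subgroup of the isotropy group `x𝒢x`, as a set of arrows. -/
def IsSubgroupAt (G : GroupoidStruct B) (x : B) (H : Set B) : Prop :=
  (∀ a ∈ H, G.src a = x ∧ G.rng a = x) ∧ x ∈ H ∧
  (∀ a ∈ H, ∀ b ∈ H, G.comp a b ∈ H) ∧ (∀ a ∈ H, G.inv a ∈ H)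

/-- `K` is a conjugate of `H` in the isotropy group at `x`. -/
def ConjAt (G : GroupoidStruct B) (x : B) (H K : Set B) : Prop :=
  ∃ g, G.src g = x ∧ G.rng g = x ∧
    K = (fun a => G.comp (G.comp g a) (G.inv g)) '' H

/-- `H` is a normal subset of the isotropy group at `x`. -/
def IsNormalAt (G : GroupoidStruct B) (x : B) (H : Set B) : Prop :=
  ∀ g, G.src g = x → G.rng g = x → ∀ a ∈ H, G.comp (G.comp g a) (G.inv g) ∈ H

/-- The normalizer of `H` in the isotropy group at `x`. -/
def normalizerAt (G : GroupoidStruct B) (x : B) (H : Set B) : Set B :=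
  {g | G.src g = x ∧ G.rng g = x ∧
    (fun a => G.comp (G.comp g a) (G.inv g)) '' H = H}

end GroupoidStruct

/-- `f` is a morphism of `k`-graphs (a degree-preserving functor). -/
def IsKGraphHomFun {k : ℕ} {A A' : Type} (S : KGraphStruct k A)
    (T : KGraphStruct k A') (f : A → A') : Prop :=
  (∀ a, f (S.src a) = T.src (f a)) ∧
  (∀ a, f (S.rng a) = T.rng (f a)) ∧
  (∀ a b, S.src a = S.rng b → f (S.comp a b) = T.comp (f a) (f b)) ∧
  (∀ a, T.deg (f a) = S.deg a)

/-- `f` is a functor from a `k`-graph to a groupoid. -/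
def IsFunctorToGpdFun {k : ℕ} {A B : Type} (S : KGraphStruct k A)
    (G : GroupoidStruct B) (f : A → B) : Prop :=
  (∀ a, f (S.src a) = G.src (f a)) ∧
  (∀ a, f (S.rng a) = G.rng (f a)) ∧
  (∀ a b, S.src a = S.rng b → f (S.comp a b) = G.comp (f a) (f b))

/-- `f` is a morphism of groupoids (a functor). -/
def IsGpdHomFun {B C : Type} (G : GroupoidStruct B) (H : GroupoidStruct C)
    (f : B → C) : Prop :=
  (∀ a, f (G.src a) = H.src (f a)) ∧
  (∀ a, f (G.rng a) = H.rng (f a)) ∧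
  (∀ a b, G.src a = G.rng b → f (G.comp a b) = H.comp (f a) (f b))

/-- `p : Ω → Λ` is a covering of `k`-graphs: a surjective `k`-graph morphism
which maps `Ωv` bijectively onto `Λp(v)` and `vΩ` bijectively onto `p(v)Λ`
for every vertex `v` of `Ω`. -/
structure IsCovering {k : ℕ} {A A' : Type} (S : KGraphStruct k A')
    (T : KGraphStruct k A) (p : A' → A) : Prop where
  hom : IsKGraphHomFun S T p
  surj : Function.Surjective p
  src_inj : ∀ a b, S.src a = S.src b → p a = p b → a = b
  src_lift : ∀ v, S.IsVertex v → ∀ g, T.src g = p v → ∃ a, S.src a = v ∧ p a = g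
  rng_inj : ∀ a b, S.rng a = S.rng b → p a = p b → a = b
  rng_lift : ∀ v, S.IsVertex v → ∀ g, T.rng g = p v → ∃ a, S.rng a = v ∧ p a = g

/-- A fundamental groupoid of a `k`-graph `S`: a groupoid `G` whose object
set is identified with the vertex set of `S` via the canonical functor `i`
(which is bijective on objects), with the universal property that every
functor from `S` to a groupoid factors uniquely through `i`. -/
structure FundamentalGroupoid {k : ℕ} {A : Type} (S : KGraphStruct k A) :
    Type 1 where
  B : Type
  G : GroupoidStruct B
  i : A → B
  i_hom : IsFunctorToGpdFun S G i
  obj_bij : ∀ w, G.IsVertex w → ∃! v, S.IsVertex v ∧ i v = w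
  univ : ∀ {C : Type} (H : GroupoidStruct C) (F : A → C),
    IsFunctorToGpdFun S H F →
    ∃! F' : B → C, IsGpdHomFun G H F' ∧ ∀ a, F' (i a) = F a

/-- The fundamental group `π(Λ,x)` at a vertex `x`, as the isotropy of the
fundamental groupoid at `i x`. -/
def FundamentalGroupoid.pi1 {k : ℕ} {A : Type} {S : KGraphStruct k A}
    (F : FundamentalGroupoid S) (x : A) : Set F.B :=
  {a | F.G.src a = F.i x ∧ F.G.rng a = F.i x}

/-- An automorphism of the covering `p : Ω → Λ`. -/
def IsCoveringAut {k : ℕ} {A A' : Type} (Ω : KGraphStruct k A')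
    (Λ : KGraphStruct k A) (p : A' → A) (φ : A' → A') : Prop :=
  Function.Bijective φ ∧ IsKGraphHomFun Ω Ω φ ∧ ∀ a, p (φ a) = p a

/-- The action of the fundamental groupoid `F = 𝒢(Λ)` on the vertex set of a
covering `p : Ω → Λ`, determined by `i(p(λ)) ⬝ s(λ) = r(λ)`.  The fiber of a
vertex `w` of `Ω` is over the object `F.i (p w)`. -/
structure CorrespondingAction {k : ℕ} {A A' : Type} (Ω : KGraphStruct k A')
    (Λ : KGraphStruct k A) (F : FundamentalGroupoid Λ) (p : A' → A)
    (act : F.B → A' → A') : Prop where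
  act_vertex : ∀ a w, Ω.IsVertex w → F.G.src a = F.i (p w) →
    Ω.IsVertex (act a w) ∧ F.i (p (act a w)) = F.G.rng a
  act_id : ∀ w, Ω.IsVertex w → act (F.i (p w)) w = w
  act_comp : ∀ a b w, Ω.IsVertex w → F.G.src b = F.i (p w) →
    F.G.src a = F.G.rng b → act (F.G.comp a b) w = act a (act b w)
  act_cov : ∀ lam, act (F.i (p lam)) (Ω.src lam) = Ω.rng lam

/-- An action of a groupoid `G` on a set `V`, presented by an anchor map
`fib : V → B` (landing in vertices) and a guarded action map. -/
structure GpdActionStruct {B : Type} (G : GroupoidStruct B) (V : Type) :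
    Type where
  fib : V → B
  act : B → V → V
  fib_vertex : ∀ v, G.src (fib v) = fib v
  act_fib : ∀ a v, G.src a = fib v → fib (act a v) = G.rng a
  act_id : ∀ v, act (fib v) v = v
  act_comp : ∀ a b v, G.src b = fib v → G.src a = G.rng b →
    act (G.comp a b) v = act a (act b v)

namespace GpdActionStruct

variable {B V W : Type} {G : GroupoidStruct B}

/-- Transitivity of a groupoid action. -/
def Transitive (ρ : GpdActionStruct G V) : Prop :=
  ∀ u v : V, ∃ a, G.src a = ρ.fib v ∧ ρ.act a v = u

/-- The stability group of the action at `v`. -/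
def stab (ρ : GpdActionStruct G V) (v : V) : Set B :=
  {a | G.src a = ρ.fib v ∧ G.rng a = ρ.fib v ∧ ρ.act a v = v}

/-- Freeness of a groupoid action: all stability groups are trivial. -/
def Free (ρ : GpdActionStruct G V) : Prop :=
  ∀ (v : V) (a : B), a ∈ ρ.stab v → a = ρ.fib v

end GpdActionStruct

/-- A morphism of actions of the groupoid `G`: a fiber-preserving
equivariant map. -/
def IsActionHom {B V W : Type} {G : GroupoidStruct B}
    (ρ : GpdActionStruct G V) (σ : GpdActionStruct G W) (φ : V → W) : Prop :=
  (∀ v, σ.fib (φ v) = ρ.fib v) ∧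
  ∀ a v, G.src a = ρ.fib v → φ (ρ.act a v) = σ.act a (φ v)

/-- An automorphism of an action of the groupoid `G`. -/
def IsActionAut {B V : Type} {G : GroupoidStruct B}
    (ρ : GpdActionStruct G V) (φ : V → V) : Prop :=
  Function.Bijective φ ∧ IsActionHom ρ ρ φ

/-- A universal covering: a connected covering admitting a morphism of
coverings to every connected covering of the base. -/
def IsUniversalCovering {k : ℕ} {A A' : Type} (Ω : KGraphStruct k A')
    (Λ : KGraphStruct k A) (p : A' → A) : Prop :=
  IsCovering Ω Λ p ∧ Ω.Connected ∧
  ∀ (A'' : Type) (Sg : KGraphStruct k A'') (q : A'' → A),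
    IsCovering Sg Λ q → Sg.Connected →
    ∃ φ : A' → A'', IsKGraphHomFun Ω Sg φ ∧ ∀ a, q (φ a) = p a

end KGraphCovering

namespace KGraphCovering

/-- Auxiliary: in a groupoid, `inv` is an involution. -/
private lemma gpd_inv_inv {B : Type} (G : GroupoidStruct B) (f : B) :
    G.inv (G.inv f) = f := by
  calc G.inv (G.inv f)
      = G.comp (G.inv (G.inv f)) (G.src (G.inv (G.inv f))) := (G.comp_src_id _).symm
    _ = G.comp (G.inv (G.inv f)) (G.comp (G.inv f) f) := by
        rw [G.src_inv, G.rng_inv, G.inv_comp_self]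
    _ = G.comp (G.comp (G.inv (G.inv f)) (G.inv f)) f :=
        (G.assoc _ _ _ (G.src_inv _) (G.src_inv f)).symm
    _ = G.comp (G.src (G.inv f)) f := by rw [G.inv_comp_self]
    _ = G.comp (G.rng f) f := by rw [G.src_inv]
    _ = f := G.rng_comp_id f

/-- For a transitive action of a groupoid `𝒢` on `V`, an
object `x` and `v ∈ V_x`, the automorphism group `Aut(V,𝒢)` is isomorphic to
`N(S_v)/S_v`: each `c` in the normalizer `N(S_v)` of `S_v` in `x𝒢x`
determines a well-defined automorphism `av ↦ acv` (`a ∈ 𝒢x`), this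
assignment is surjective onto `Aut(V,𝒢)`, multiplicative (as a right
action, `Θ c ∘ Θ c' = Θ (c'c)`), and identifies `c, c'` exactly when
`c⁻¹c' ∈ S_v`. -/
theorem aut_action_iso_normalizer_quotient {B V : Type}
    (G : GroupoidStruct B) (ρ : GpdActionStruct G V)
    (htrans : ρ.Transitive) (x : B) (hx : G.IsVertex x)
    (v : V) (hv : ρ.fib v = x) :
    ∃ Θ : B → (V → V),
      (∀ c ∈ G.normalizerAt x (ρ.stab v),
        IsActionAut ρ (Θ c) ∧
        ∀ a, G.src a = x → Θ c (ρ.act a v) = ρ.act (G.comp a c) v) ∧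
      (∀ φ, IsActionAut ρ φ → ∃ c ∈ G.normalizerAt x (ρ.stab v), Θ c = φ) ∧
      (∀ c ∈ G.normalizerAt x (ρ.stab v), ∀ c' ∈ G.normalizerAt x (ρ.stab v),
        Θ c ∘ Θ c' = Θ (G.comp c' c)) ∧
      (∀ c ∈ G.normalizerAt x (ρ.stab v), ∀ c' ∈ G.normalizerAt x (ρ.stab v),
        (Θ c = Θ c' ↔ G.comp (G.inv c) c' ∈ ρ.stab v)) := by
  classical
  choose aF h1 h2 using fun u => htrans u v
  have haS : ∀ u, G.src (aF u) = x := fun u => (h1 u).trans hv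
  have haA : ∀ u, ρ.act (aF u) v = u := h2
  set Θ : B → V → V := fun c u => ρ.act (G.comp (aF u) c) v with hΘdef
  have hxr : G.rng x = x := by rw [← hx, G.rng_src]
  have hactx : ρ.act x v = v := by rw [← hv]; exact ρ.act_id v
  have hfibact : ∀ a, G.src a = x → ρ.fib (ρ.act a v) = G.rng a := fun a ha =>
    ρ.act_fib a v (by rw [ha, hv])
  have hcompact : ∀ a b, G.src b = x → G.src a = G.rng b →
      ρ.act (G.comp a b) v = ρ.act a (ρ.act b v) := fun a b hb hab =>
    ρ.act_comp a b v (by rw [hb, hv]) hab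
  have hmem : ∀ s, s ∈ ρ.stab v ↔ (G.src s = x ∧ G.rng s = x ∧ ρ.act s v = v) := by
    intro s
    simp only [GpdActionStruct.stab, Set.mem_setOf_eq, hv]
  -- well-definedness of the assignment av ↦ acv for c in the normalizer
  have wd : ∀ c, c ∈ G.normalizerAt x (ρ.stab v) → ∀ a a', G.src a = x → G.src a' = x →
      ρ.act a v = ρ.act a' v → ρ.act (G.comp a c) v = ρ.act (G.comp a' c) v := by
    intro c hc a a' ha ha' haa
    obtain ⟨hc1, hc2, hc3⟩ := hc
    have hra : G.rng a = G.rng a' := by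
      rw [← hfibact a ha, ← hfibact a' ha', haa]
    have hsrcinv : G.src (G.inv a') = G.rng a := by rw [G.src_inv, hra]
    have hs1 : G.src (G.comp (G.inv a') a) = x := by rw [G.src_comp _ _ hsrcinv, ha]
    have hs2 : G.rng (G.comp (G.inv a') a) = x := by
      rw [G.rng_comp _ _ hsrcinv, G.rng_inv, ha']
    have hs3 : ρ.act (G.comp (G.inv a') a) v = v := by
      rw [hcompact _ _ ha hsrcinv, haa,
        ← hcompact _ _ ha' (G.src_inv a'), G.inv_comp_self, ha', hactx]
    have hsS : G.comp (G.inv a') a ∈ ρ.stab v := (hmem _).2 ⟨hs1, hs2, hs3⟩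
    have hsim : G.comp (G.inv a') a ∈
        (fun a => G.comp (G.comp c a) (G.inv c)) '' (ρ.stab v) := by
      rw [hc3]; exact hsS
    obtain ⟨t, htS, hteq⟩ := hsim
    have hteq' : G.comp (G.comp c t) (G.inv c) = G.comp (G.inv a') a := hteq
    obtain ⟨ht1, ht2, ht3⟩ := (hmem t).1 htS
    have hct : G.src c = G.rng t := hc1.trans ht2.symm
    have hsct : G.src (G.comp c t) = x := by rw [G.src_comp c t hct, ht1]
    -- a = a' (a'⁻¹ a)
    have hA : G.comp a' (G.comp (G.inv a') a) = a := by
      rw [← G.assoc a' (G.inv a') a (by rw [G.rng_inv]) hsrcinv, G.comp_inv_self, ← hra,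
        G.rng_comp_id]
    -- (a'⁻¹ a) c = c t
    have hsc : G.comp (G.comp (G.inv a') a) c = G.comp c t := by
      rw [← hteq', G.assoc (G.comp c t) (G.inv c) c
        (by rw [G.src_comp c t hct, G.rng_inv, ht1, hc1]) (G.src_inv c),
        G.inv_comp_self, hc1, ← hsct, G.comp_src_id]
    calc ρ.act (G.comp a c) v
        = ρ.act (G.comp (G.comp a' (G.comp (G.inv a') a)) c) v := by rw [hA]
      _ = ρ.act (G.comp a' (G.comp (G.comp (G.inv a') a) c)) v := by
          rw [G.assoc a' (G.comp (G.inv a') a) c (ha'.trans hs2.symm)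
            (hs1.trans hc2.symm)]
      _ = ρ.act (G.comp a' (G.comp c t)) v := by rw [hsc]
      _ = ρ.act a' (ρ.act (G.comp c t) v) := by
          rw [hcompact a' (G.comp c t) hsct
            (by rw [ha', G.rng_comp c t hct, hc2])]
      _ = ρ.act a' (ρ.act c (ρ.act t v)) := by rw [hcompact c t ht1 hct]
      _ = ρ.act a' (ρ.act c v) := by rw [ht3]
      _ = ρ.act (G.comp a' c) v := (hcompact a' c hc1 (ha'.trans hc2.symm)).symm
  -- the basic formula
  have hΘ : ∀ c, c ∈ G.normalizerAt x (ρ.stab v) → ∀ a, G.src a = x →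
      Θ c (ρ.act a v) = ρ.act (G.comp a c) v := by
    intro c hc a ha
    simp only [hΘdef]
    exact wd c hc _ a (haS _) ha (haA _)
  have hΘx : ∀ u, Θ x u = u := by
    intro u
    simp only [hΘdef]
    have hax : G.comp (aF u) x = aF u := by rw [← haS u]; exact G.comp_src_id _
    rw [hax, haA]
  have hΘv : ∀ c, c ∈ G.normalizerAt x (ρ.stab v) → Θ c v = ρ.act c v := by
    intro c hc
    obtain ⟨hc1, hc2, -⟩ := id hc
    have h := hΘ c hc x hx
    have hxc : G.comp x c = c := by rw [← hc2]; exact G.rng_comp_id c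
    rw [hactx, hxc] at h
    exact h
  -- multiplicativity (only the outer element needs to normalize)
  have hmul : ∀ c, c ∈ G.normalizerAt x (ρ.stab v) → ∀ c', G.src c' = x → G.rng c' = x →
      ∀ u, Θ c (Θ c' u) = Θ (G.comp c' c) u := by
    intro c hc c' hd1 hd2 u
    obtain ⟨hc1, hc2, -⟩ := id hc
    have g : G.src (aF u) = G.rng c' := (haS u).trans hd2.symm
    have e1 : Θ c (Θ c' u) = ρ.act (G.comp (G.comp (aF u) c') c) v := by
      simp only [hΘdef]
      exact wd c hc _ (G.comp (aF u) c') (haS _)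
        (by rw [G.src_comp _ _ g, hd1]) (haA _)
    have e2 : G.comp (G.comp (aF u) c') c = G.comp (aF u) (G.comp c' c) :=
      G.assoc _ _ _ g (hd1.trans hc2.symm)
    rw [e1, e2]
  -- conjugating back and forth is the identity
  have conjconj : ∀ c s, G.src c = x → G.rng c = x → G.src s = x → G.rng s = x →
      G.comp (G.comp (G.inv c) (G.comp (G.comp c s) (G.inv c))) (G.inv (G.inv c)) = s := by
    intro c s hc1 hc2 hs1 hs2
    have gcs : G.src c = G.rng s := hc1.trans hs2.symm
    have e1 : G.comp (G.inv c) (G.comp c s) = s := by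
      rw [← G.assoc (G.inv c) c s (G.src_inv c) gcs, G.inv_comp_self, hc1, ← hs2,
        G.rng_comp_id]
    have e2 : G.comp (G.inv c) (G.comp (G.comp c s) (G.inv c)) = G.comp s (G.inv c) := by
      rw [← G.assoc (G.inv c) (G.comp c s) (G.inv c)
        (by rw [G.src_inv, G.rng_comp c s gcs])
        (by rw [G.src_comp c s gcs, G.rng_inv, hs1, hc1]), e1]
    rw [gpd_inv_inv, e2, G.assoc s (G.inv c) c (by rw [G.rng_inv, hs1, hc1]) (G.src_inv c),
      G.inv_comp_self, hc1, ← hs1, G.comp_src_id]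
  -- sufficient condition for normalizer membership
  have hNofconj : ∀ c, G.src c = x → G.rng c = x →
      (∀ s ∈ ρ.stab v, G.comp (G.comp c s) (G.inv c) ∈ ρ.stab v) →
      (∀ s ∈ ρ.stab v, G.comp (G.comp (G.inv c) s) (G.inv (G.inv c)) ∈ ρ.stab v) →
      c ∈ G.normalizerAt x (ρ.stab v) := by
    intro c hc1 hc2 hfwd hbwd
    refine ⟨hc1, hc2, ?_⟩
    apply Set.Subset.antisymm
    · rintro _ ⟨s, hsS, rfl⟩
      exact hfwd s hsS
    · intro s hsS
      refine ⟨G.comp (G.comp (G.inv c) s) (G.inv (G.inv c)), hbwd s hsS, ?_⟩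
      obtain ⟨hs1, hs2, hs3⟩ := (hmem s).1 hsS
      show G.comp (G.comp c (G.comp (G.comp (G.inv c) s) (G.inv (G.inv c)))) (G.inv c) = s
      have h := conjconj (G.inv c) s (by rw [G.src_inv, hc2]) (by rw [G.rng_inv, hc1])
        hs1 hs2
      rw [gpd_inv_inv] at h
      rw [gpd_inv_inv]
      exact h
  -- the normalizer is closed under inversion
  have hNinv : ∀ c, c ∈ G.normalizerAt x (ρ.stab v) →
      G.inv c ∈ G.normalizerAt x (ρ.stab v) := by
    intro c hc
    obtain ⟨hc1, hc2, hc3⟩ := id hc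
    apply hNofconj (G.inv c) (by rw [G.src_inv, hc2]) (by rw [G.rng_inv, hc1])
    · intro s hsS
      have hsim : s ∈ (fun a => G.comp (G.comp c a) (G.inv c)) '' (ρ.stab v) := by
        rw [hc3]; exact hsS
      obtain ⟨t, htS, hteq⟩ := hsim
      have hteq' : G.comp (G.comp c t) (G.inv c) = s := hteq
      obtain ⟨ht1, ht2, ht3⟩ := (hmem t).1 htS
      have h := conjconj c t hc1 hc2 ht1 ht2
      rw [hteq'] at h
      rw [h]
      exact htS
    · intro s hsS
      rw [gpd_inv_inv]
      rw [← hc3]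
      exact ⟨s, hsS, rfl⟩
  -- conjugation by elements moving v like an automorphism preserves the stabilizer
  have hconjS : ∀ (d : B) (χ : V → V), G.src d = x → G.rng d = x →
      (∀ b u, G.src b = ρ.fib u → χ (ρ.act b u) = ρ.act b (χ u)) →
      ρ.act (G.inv d) v = χ v →
      ∀ s ∈ ρ.stab v, G.comp (G.comp d s) (G.inv d) ∈ ρ.stab v := by
    intro d χ hd1 hd2 hχ hχv s hsS
    obtain ⟨hs1, hs2, hs3⟩ := (hmem s).1 hsS
    have gds : G.src d = G.rng s := hd1.trans hs2.symm
    have g2 : G.src (G.comp d s) = G.rng (G.inv d) := by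
      rw [G.src_comp d s gds, hs1, G.rng_inv, hd1]
    have hfχ : ρ.fib (χ v) = x := by
      rw [← hχv, hfibact (G.inv d) (by rw [G.src_inv, hd2]), G.rng_inv, hd1]
    refine (hmem _).2 ⟨?_, ?_, ?_⟩
    · rw [G.src_comp _ _ g2, G.src_inv, hd2]
    · rw [G.rng_comp _ _ g2, G.rng_comp d s gds, hd2]
    · rw [hcompact (G.comp d s) (G.inv d) (by rw [G.src_inv, hd2]) g2, hχv,
        ρ.act_comp d s (χ v) (by rw [hs1, hfχ]) gds,
        ← hχ s v (by rw [hs1, hv]), hs3, ← hχv,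
        ← ρ.act_comp d (G.inv d) v (by rw [G.src_inv, hd2, hv]) (G.rng_inv d).symm,
        G.comp_inv_self, hd2, hactx]
  refine ⟨Θ, ?_, ?_, ?_, ?_⟩
  · -- part 1: each normalizer element gives an automorphism with the right formula
    intro c hc
    obtain ⟨hc1, hc2, hc3⟩ := id hc
    have hNi := hNinv c hc
    have hi1 : G.src (G.inv c) = x := by rw [G.src_inv, hc2]
    have hi2 : G.rng (G.inv c) = x := by rw [G.rng_inv, hc1]
    refine ⟨⟨?_, ?_, ?_⟩, hΘ c hc⟩
    · -- bijectivity
      refine Function.bijective_iff_has_inverse.mpr ⟨Θ (G.inv c), ?_, ?_⟩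
      · intro u
        have h := hmul (G.inv c) hNi c hc1 hc2 u
        have hcc : G.comp c (G.inv c) = x := by rw [G.comp_inv_self, hc2]
        rw [hcc] at h
        rw [h]
        exact hΘx u
      · intro u
        have h := hmul c hc (G.inv c) hi1 hi2 u
        have hcc : G.comp (G.inv c) c = x := by rw [G.inv_comp_self, hc1]
        rw [hcc] at h
        rw [h]
        exact hΘx u
    · -- fiber preserving
      intro u
      simp only [hΘdef]
      have g : G.src (aF u) = G.rng c := (haS u).trans hc2.symm
      rw [hfibact _ (by rw [G.src_comp _ _ g, hc1]), G.rng_comp _ _ g,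
        ← hfibact (aF u) (haS u), haA]
    · -- equivariance
      intro b u hb
      have hfu : ρ.fib u = G.rng (aF u) := by
        rw [← hfibact (aF u) (haS u), haA]
      have hba : ρ.act b u = ρ.act (G.comp b (aF u)) v := by
        rw [ρ.act_comp b (aF u) v (by rw [haS u, hv]) (hb.trans hfu), haA]
      rw [hba, hΘ c hc (G.comp b (aF u)) (by rw [G.src_comp _ _ (hb.trans hfu), haS]),
        G.assoc b (aF u) c (hb.trans hfu) ((haS u).trans hc2.symm),
        ρ.act_comp b (G.comp (aF u) c) v
          (by rw [G.src_comp _ _ ((haS u).trans hc2.symm), hc1, hv])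
          (by rw [G.rng_comp _ _ ((haS u).trans hc2.symm), hb, hfu])]
  · -- part 2: surjectivity
    intro φ hφ
    obtain ⟨hbij, hfibφ, hequivφ⟩ := hφ
    set ψ : V → V := ⇑(Equiv.ofBijective φ hbij).symm with hψdef
    have hψφ : ∀ u, ψ (φ u) = u := fun u => (Equiv.ofBijective φ hbij).symm_apply_apply u
    have hφψ : ∀ u, φ (ψ u) = u := fun u => (Equiv.ofBijective φ hbij).apply_symm_apply u
    have hfψ : ∀ u, ρ.fib (ψ u) = ρ.fib u := by
      intro u
      rw [← hfibφ (ψ u), hφψ]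
    have hψeq : ∀ b u, G.src b = ρ.fib u → ψ (ρ.act b u) = ρ.act b (ψ u) := by
      intro b u hb
      apply hbij.1
      rw [hφψ, hequivφ b (ψ u) (by rw [hfψ]; exact hb), hφψ]
    obtain ⟨c, hcc1, hcc2⟩ := htrans (φ v) v
    have hc1 : G.src c = x := hcc1.trans hv
    have hc2 : G.rng c = x := by
      rw [← hfibact c hc1, hcc2, hfibφ]; exact hv
    have hinv1 : G.src (G.inv c) = x := by rw [G.src_inv, hc2]
    have hinv2 : G.rng (G.inv c) = x := by rw [G.rng_inv, hc1]
    have hψv : ρ.act (G.inv c) v = ψ v := by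
      conv_lhs => rw [← hψφ v]
      rw [← hψeq (G.inv c) (φ v) (by rw [hinv1, hfibφ, hv]), ← hcc2,
        ← ρ.act_comp (G.inv c) c v (by rw [hc1, hv]) (G.src_inv c),
        G.inv_comp_self, hc1, hactx]
    have hcN : c ∈ G.normalizerAt x (ρ.stab v) := by
      apply hNofconj c hc1 hc2
      · exact hconjS c ψ hc1 hc2 hψeq hψv
      · intro s hsS
        exact hconjS (G.inv c) φ hinv1 hinv2 hequivφ
          (by rw [gpd_inv_inv]; exact hcc2) s hsS
    refine ⟨c, hcN, ?_⟩
    funext u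
    simp only [hΘdef]
    rw [ρ.act_comp (aF u) c v (by rw [hc1, hv]) ((haS u).trans hc2.symm), hcc2,
      ← hequivφ (aF u) v (by rw [haS u, hv]), haA]
  · -- part 3: multiplicativity
    intro c hc c' hc'
    obtain ⟨hd1, hd2, -⟩ := id hc'
    funext u
    exact hmul c hc c' hd1 hd2 u
  · -- part 4: kernel
    intro c hc c' hc'
    obtain ⟨hc1, hc2, -⟩ := id hc
    obtain ⟨hd1, hd2, -⟩ := id hc'
    have gcd : G.src (G.inv c) = G.rng c' := by rw [G.src_inv, hc2, hd2]
    constructor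
    · intro h
      have h1 : ρ.act c v = ρ.act c' v := by
        rw [← hΘv c hc, ← hΘv c' hc', h]
      refine (hmem _).2 ⟨?_, ?_, ?_⟩
      · rw [G.src_comp _ _ gcd, hd1]
      · rw [G.rng_comp _ _ gcd, G.rng_inv, hc1]
      · rw [ρ.act_comp (G.inv c) c' v (by rw [hd1, hv]) gcd, ← h1,
          ← ρ.act_comp (G.inv c) c v (by rw [hc1, hv]) (G.src_inv c),
          G.inv_comp_self, hc1, hactx]
    · intro hsS
      obtain ⟨hs1, hs2, hs3⟩ := (hmem _).1 hsS
      have hc'eq : c' = G.comp c (G.comp (G.inv c) c') := by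
        rw [← G.assoc c (G.inv c) c' (G.rng_inv c).symm gcd, G.comp_inv_self, hc2,
          ← hd2, G.rng_comp_id]
      funext u
      simp only [hΘdef]
      conv_rhs => rw [hc'eq]
      rw [← G.assoc (aF u) c (G.comp (G.inv c) c') ((haS u).trans hc2.symm)
          (by rw [G.rng_comp _ _ gcd, G.rng_inv, hc1]),
        ρ.act_comp (G.comp (aF u) c) (G.comp (G.inv c) c') v (by rw [hs1, hv])
          (by rw [G.src_comp _ _ ((haS u).trans hc2.symm), hc1, hs2]), hs3]

end KGraphCovering
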